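/- Let T be a bounded linear operator on a complex Hilbert space H with N(T) ⊆ N(T*) (in particular this holds if R(T) ⊆ R(T*)). If 0 is not a limit point of the spectrum σ(T) and the restriction T' := T restricted to N(T)⊥ (a bounded operator on the Hilbert space N(T)⊥) is isoloid, then R(T) is closed. -/

import Mathlib

/-- An operator `S` is isoloid if every isolated point of its spectrum is an
eigenvalue. -/
def Isoloid {E : Type*} [NormedAddCommGroup E] [NormedSpace ℂ E]
    (S : E →L[ℂ] E) : Prop :=
  ∀ z ∈ spectrum ℂ S, ¬ AccPt z (Filter.principal (spectrum ℂ S)) →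
    ∃ x : E, x ≠ 0 ∧ S x = z • x

/-- Corollary 3.4: Let `T` be a bounded operator on a complex Hilbert space `H` with
`N(T) ⊆ N(T*)`.  If `0` is not a limit point of `σ(T)` and `T' = T|_{N(T)ᗮ}` is
isoloid, then `R(T)` is closed. -/
theorem stmt8 {H : Type*} [NormedAddCommGroup H] [InnerProductSpace ℂ H] [CompleteSpace H]
    (T : H →L[ℂ] H)
    (hqp : LinearMap.ker (T : H →ₗ[ℂ] H) ≤ LinearMap.ker (ContinuousLinearMap.adjoint T : H →ₗ[ℂ] H))
    (hacc : ¬ AccPt (0 : ℂ) (Filter.principal (spectrum ℂ T)))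
    (T' : (LinearMap.ker (T : H →ₗ[ℂ] H))ᗮ →L[ℂ] (LinearMap.ker (T : H →ₗ[ℂ] H))ᗮ)
    (hT' : ∀ x : (LinearMap.ker (T : H →ₗ[ℂ] H))ᗮ, (T' x : H) = T x)
    (hiso : Isoloid T') :
    IsClosed (Set.range T) := by
  -- R(T) ⊆ N(T)ᗮ
  have hran : ∀ u : H, T u ∈ (LinearMap.ker (T : H →ₗ[ℂ] H))ᗮ := by
    intro u v hv
    have hv' : (ContinuousLinearMap.adjoint T) v = 0 := hqp hv
    rw [← ContinuousLinearMap.adjoint_inner_left, hv', inner_zero_left]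
  -- T' is injective
  have hinj : Function.Injective T' := by
    intro x y hxy
    have h1 : T (x : H) = T (y : H) := by rw [← hT', ← hT', hxy]
    have h2 : ((x : H) - y) ∈ LinearMap.ker (T : H →ₗ[ℂ] H) := by
      simpa [LinearMap.mem_ker, map_sub, sub_eq_zero] using h1
    have h3 : ((x : H) - y) ∈ (LinearMap.ker (T : H →ₗ[ℂ] H))ᗮ :=
      Submodule.sub_mem _ x.2 y.2
    have h4 : (x : H) - y = 0 := by
      have := (LinearMap.ker (T : H →ₗ[ℂ] H)).orthogonal_disjoint.le_bot ⟨h2, h3⟩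
      simpa using this
    exact Subtype.coe_injective (sub_eq_zero.mp h4)
  -- spectrum of T' away from 0 is contained in spectrum of T
  have hspec : ∀ l : ℂ, l ≠ 0 → l ∉ spectrum ℂ T → l ∉ spectrum ℂ T' := by
    intro l hl0 hlT
    obtain ⟨u, hu⟩ := spectrum.notMem_iff.mp hlT
    set f : (LinearMap.ker (T : H →ₗ[ℂ] H))ᗮ →L[ℂ] (LinearMap.ker (T : H →ₗ[ℂ] H))ᗮ :=
      (algebraMap ℂ _) l - T' with hf
    have hfcoe : ∀ x : (LinearMap.ker (T : H →ₗ[ℂ] H))ᗮ, ((f x : H)) = l • (x : H) - T (x : H) := by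
      intro x
      simp only [hf, ContinuousLinearMap.sub_apply, Algebra.algebraMap_eq_smul_one,
        ContinuousLinearMap.smul_apply, ContinuousLinearMap.one_apply]
      rw [Submodule.coe_sub, Submodule.coe_smul, hT' x]
    have hucoe : ∀ w : H, (↑u : H →L[ℂ] H) w = l • w - T w := by
      intro w
      rw [hu]
      simp [Algebra.algebraMap_eq_smul_one]
    -- injective
    have hfinj : LinearMap.ker (f : (LinearMap.ker (T : H →ₗ[ℂ] H))ᗮ →ₗ[ℂ] (LinearMap.ker (T : H →ₗ[ℂ] H))ᗮ) = ⊥ := by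
      apply LinearMap.ker_eq_bot'.mpr
      intro x hfx
      have hxy : f x = f 0 := by rw [map_zero]; exact hfx
      have h1 : l • ((x : H)) - T (x : H) = l • ((0 : (LinearMap.ker (T : H →ₗ[ℂ] H))ᗮ) : H) - T ((0 : (LinearMap.ker (T : H →ₗ[ℂ] H))ᗮ) : H) := by
        rw [← hfcoe, ← hfcoe, hxy]
      have h2 : (↑u : H →L[ℂ] H) (x : H) = (↑u : H →L[ℂ] H) ((0 : (LinearMap.ker (T : H →ₗ[ℂ] H))ᗮ) : H) := by
        rw [hucoe, hucoe, h1]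
      have h3 : (x : H) = ((0 : (LinearMap.ker (T : H →ₗ[ℂ] H))ᗮ) : H) := by
        have h4 := congrArg (fun z => (↑u⁻¹ : H →L[ℂ] H) z) h2
        have h5 := ContinuousLinearMap.ext_iff.mp u.inv_mul
        simp only [ContinuousLinearMap.mul_apply, ContinuousLinearMap.one_apply] at h5
        simpa [← ContinuousLinearMap.mul_apply, h5] using h4
      exact Subtype.coe_injective h3
    -- surjective
    have hfsurj : LinearMap.range (f : (LinearMap.ker (T : H →ₗ[ℂ] H))ᗮ →ₗ[ℂ] (LinearMap.ker (T : H →ₗ[ℂ] H))ᗮ) = ⊤ := by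
      rw [LinearMap.range_eq_top]
      intro y
      set x : H := (↑u⁻¹ : H →L[ℂ] H) (y : H) with hx
      have hxy : l • x - T x = (y : H) := by
        rw [← hucoe]
        have h := ContinuousLinearMap.ext_iff.mp u.mul_inv (y : H)
        rwa [ContinuousLinearMap.mul_apply, ContinuousLinearMap.one_apply] at h
      obtain ⟨a, ha, b, hb, hab⟩ := (LinearMap.ker (T : H →ₗ[ℂ] H)).exists_add_mem_mem_orthogonal x
      have hTa : T a = 0 := ha
      have hxK : x ∈ (LinearMap.ker (T : H →ₗ[ℂ] H))ᗮ := by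
        have key : l • a = (y : H) - (l • b - T b) := by
          rw [hab] at hxy
          rw [map_add, hTa, zero_add, smul_add] at hxy
          rw [← hxy]
          abel
        have hmem : l • a ∈ (LinearMap.ker (T : H →ₗ[ℂ] H))ᗮ := by
          rw [key]
          exact Submodule.sub_mem _ y.2
            (Submodule.sub_mem _ (Submodule.smul_mem _ l hb) (hran b))
        have hmem' : l • a ∈ LinearMap.ker (T : H →ₗ[ℂ] H) := Submodule.smul_mem _ l ha
        have h0' : l • a = 0 := by
          have := (LinearMap.ker (T : H →ₗ[ℂ] H)).orthogonal_disjoint.le_bot ⟨hmem', hmem⟩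
          simpa using this
        have ha0 : a = 0 := by
          rcases smul_eq_zero.mp h0' with h | h
          · exact absurd h hl0
          · exact h
        rw [hab, ha0, zero_add]; exact hb
      refine ⟨⟨x, hxK⟩, ?_⟩
      apply Subtype.coe_injective
      show ((f ⟨x, hxK⟩ : (LinearMap.ker (T : H →ₗ[ℂ] H))ᗮ) : H) = (y : H)
      rw [hfcoe ⟨x, hxK⟩]
      exact hxy
    have hUf : IsUnit f := by
      haveI : CompleteSpace ((LinearMap.ker (T : H →ₗ[ℂ] H))ᗮ : Submodule ℂ H) :=
        (Submodule.isClosed_orthogonal _).completeSpace_coe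
      let e := ContinuousLinearEquiv.ofBijective f hfinj hfsurj
      refine ⟨⟨f, e.symm.toContinuousLinearMap, ?_, ?_⟩, rfl⟩
      · ext z
        have h : f (e.symm z) = z := by
          have := e.apply_symm_apply z
          rwa [show ⇑e = ⇑f from ContinuousLinearEquiv.coeFn_ofBijective f hfinj hfsurj] at this
        simpa [ContinuousLinearMap.mul_def] using h
      · ext z
        have h : e.symm (f z) = z := by
          have := e.symm_apply_apply z
          rwa [show ⇑e = ⇑f from ContinuousLinearEquiv.coeFn_ofBijective f hfinj hfsurj] at this
        simpa [ContinuousLinearMap.mul_def] using h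
    exact spectrum.notMem_iff.mpr hUf
  -- 0 ∉ σ(T')
  have h0 : (0 : ℂ) ∉ spectrum ℂ T' := by
    intro h0mem
    have haccT' : ¬ AccPt (0 : ℂ) (Filter.principal (spectrum ℂ T')) := by
      intro h
      apply hacc
      rw [accPt_iff_nhds] at h ⊢
      intro U hU
      obtain ⟨y, ⟨hyU, hyS⟩, hy0⟩ := h U hU
      by_cases hyT : y ∈ spectrum ℂ T
      · exact ⟨y, ⟨hyU, hyT⟩, hy0⟩
      · exact absurd hyS (hspec y hy0 hyT)
    obtain ⟨x, hx0, hxe⟩ := hiso 0 h0mem haccT'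
    have hx : T' x = 0 := by rw [hxe, zero_smul]
    exact hx0 (hinj (by rw [hx, map_zero]))
  -- hence T' is invertible, so T' is surjective
  obtain ⟨u, hu⟩ := (spectrum.zero_notMem_iff ℂ).mp h0
  have hsurj : Function.Surjective T' := by
    intro y
    refine ⟨(↑u⁻¹ : _ →L[ℂ] _) y, ?_⟩
    rw [← hu]
    have h := ContinuousLinearMap.ext_iff.mp u.mul_inv y
    rwa [ContinuousLinearMap.mul_apply, ContinuousLinearMap.one_apply] at h
  -- range T = (LinearMap.ker (T : H →ₗ[ℂ] H))ᗮ as a set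
  have hrangeEq : Set.range T = ((LinearMap.ker (T : H →ₗ[ℂ] H))ᗮ : Set H) := by
    ext z
    constructor
    · rintro ⟨w, rfl⟩
      exact hran w
    · intro hz
      obtain ⟨w, hw⟩ := hsurj ⟨z, hz⟩
      exact ⟨(w : H), by rw [← hT' w, hw]⟩
  rw [hrangeEq]
  exact Submodule.isClosed_orthogonal _
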